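/- Let Γ = {γ_1,…,γ_m} be a partition of {1,…,n} into m parts. If a unit vector ψ on n qubits is separable with respect to each bipartition {γ_i, γ̄_i} for i = 1,…,m, then ψ is a full product across Γ: there exist functions a_i : ({0,1}-strings indexed by γ_i) → ℂ, i = 1,…,m, such that ψ(j) = ∏_{i=1}^m a_i(j|_{γ_i}) for all bit strings j. -/

import Mathlib

open Finset

/-- Bit strings of length `n` (computational basis labels for `n` qubits). -/
abbrev Bits (n : ℕ) := Fin n → Bool

/-- A pure state `ψ` is separable with respect to the bipartition `{γ, γ̄}`:
it is a product of an amplitude function on the qubits in `γ` and one on those in `γ̄`. -/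
def SeparableAcross {n : ℕ} (γ : Finset (Fin n)) (ψ : Bits n → ℂ) : Prop :=
  ∃ (a : ({i // i ∈ γ} → Bool) → ℂ) (b : ({i // i ∈ γᶜ} → Bool) → ℂ),
    ∀ j : Bits n, ψ j = a (fun i => j i.1) * b (fun i => j i.1)

/-- `P` is a partition of `{1,…,n}` into `m` nonempty pairwise disjoint parts. -/
def IsMPartition (n m : ℕ) (P : Finset (Finset (Fin n))) : Prop :=
  P.card = m ∧ (∀ γ ∈ P, γ.Nonempty) ∧
    (∀ γ ∈ P, ∀ γ' ∈ P, γ ≠ γ' → Disjoint γ γ') ∧ P.sup id = Finset.univ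

/-- Glue two bit strings: take `j` on `γ` and `k` off `γ`. -/
def glueBits {n : ℕ} (γ : Finset (Fin n)) (j k : Bits n) : Bits n :=
  fun i => if i ∈ γ then j i else k i

lemma sep_mul {n : ℕ} {γ : Finset (Fin n)} {ψ : Bits n → ℂ}
    (h : SeparableAcross γ ψ) (j k : Bits n) :
    ψ j * ψ k = ψ (glueBits γ j k) * ψ (glueBits γ k j) := by
  obtain ⟨a, b, hab⟩ := h
  have h1 : ∀ (j k : Bits n),
      (fun i : {i // i ∈ γ} => glueBits γ j k i.1) = fun i => j i.1 := by
    intro j k; funext i; simp [glueBits, i.2]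
  have h2 : ∀ (j k : Bits n),
      (fun i : {i // i ∈ γᶜ} => glueBits γ j k i.1) = fun i => k i.1 := by
    intro j k; funext i
    have hi : i.1 ∉ γ := Finset.mem_compl.mp i.2
    simp [glueBits, hi]
  rw [hab, hab, hab, hab, h1, h2, h1, h2]
  ring

/-- If a unit vector `ψ` on `n` qubits is separable with respect to each bipartition
`{γ_i, γ̄_i}` determined by the parts of a partition `Γ = {γ_1,…,γ_m}`, then `ψ` is a
full product across `Γ`: `ψ(j) = ∏_i a_i(j|_{γ_i})` for suitable functions `a_i`. -/
theorem full_product_of_separable_each_part (n m : ℕ) (hn : 2 ≤ n)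
    (P : Finset (Finset (Fin n))) (hP : IsMPartition n m P)
    (ψ : Bits n → ℂ) (hψ : ∑ j, ‖ψ j‖ ^ 2 = 1)
    (hsep : ∀ γ ∈ P, SeparableAcross γ ψ) :
    ∃ a : (γ : Finset (Fin n)) → (({i // i ∈ γ} → Bool) → ℂ),
      ∀ j : Bits n, ψ j = ∏ γ ∈ P, a γ (fun i => j i.1) := by
  obtain ⟨hcard, hne, hdisj, hsup⟩ := hP
  -- ψ is not identically zero
  have hψ0 : ∃ j₀ : Bits n, ψ j₀ ≠ 0 := by
    by_contra h
    push_neg at h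
    rw [Finset.sum_congr rfl (fun j _ => by rw [h j])] at hψ
    simp at hψ
  obtain ⟨j₀, hj₀⟩ := hψ0
  -- key induction
  have key : ∀ (S : Finset (Finset (Fin n))), S ⊆ P → ∀ j : Bits n,
      ψ j₀ ^ S.card * ψ (glueBits (S.sup id) j j₀)
        = ψ j₀ * ∏ γ ∈ S, ψ (glueBits γ j j₀) := by
    intro S
    induction S using Finset.induction_on with
    | empty =>
      intro _ j
      have h0 : glueBits (∅ : Finset (Fin n)) j j₀ = j₀ := by
        funext i; simp [glueBits]
      simp [h0]
    | insert γ S hγS ih =>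
      intro hTP j
      have hγP : γ ∈ P := hTP (mem_insert_self _ _)
      have hSP : S ⊆ P := fun x hx => hTP (mem_insert_of_mem hx)
      have hdisjS : Disjoint γ (S.sup id) := by
        rw [Finset.disjoint_sup_right]
        intro γ' hγ'
        exact hdisj γ hγP γ' (hSP hγ') (fun h => hγS (h ▸ hγ'))
      have hsub : γ ⊆ (insert γ S).sup id := by
        exact Finset.le_sup (f := id) (mem_insert_self γ S)
      set T := insert γ S with hT
      have hsupT : T.sup id = γ ∪ S.sup id := by
        simp [hT, Finset.sup_insert, Finset.sup_eq_union]
      -- apply separability across γ to (glueBits (T.sup id) j j₀) and j₀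
      have hstep := sep_mul (hsep γ hγP) (glueBits (T.sup id) j j₀) j₀
      have e1 : glueBits γ (glueBits (T.sup id) j j₀) j₀ = glueBits γ j j₀ := by
        funext i
        by_cases hi : i ∈ γ
        · have : i ∈ T.sup id := hsub hi
          simp [glueBits, hi, this]
        · simp [glueBits, hi]
      have e2 : glueBits γ j₀ (glueBits (T.sup id) j j₀) = glueBits (S.sup id) j j₀ := by
        funext i
        by_cases hi : i ∈ γ
        · have : i ∉ S.sup id := Finset.disjoint_left.mp hdisjS hi
          simp [glueBits, hi, this]
        · by_cases hi' : i ∈ S.sup id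
          · have : i ∈ T.sup id := by rw [hsupT]; exact Finset.mem_union_right _ hi'
            simp [glueBits, hi, hi', this]
          · have : i ∉ T.sup id := by rw [hsupT]; simp [hi, hi']
            simp [glueBits, hi, hi', this]
      rw [e1, e2] at hstep
      have ihS := ih hSP j
      rw [Finset.card_insert_of_notMem hγS, Finset.prod_insert hγS]
      calc ψ j₀ ^ (S.card + 1) * ψ (glueBits (T.sup id) j j₀)
          = ψ j₀ ^ S.card * (ψ (glueBits (T.sup id) j j₀) * ψ j₀) := by ring
        _ = ψ j₀ ^ S.card * (ψ (glueBits γ j j₀) * ψ (glueBits (S.sup id) j j₀)) := by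
            rw [hstep]
        _ = ψ (glueBits γ j j₀) * (ψ j₀ ^ S.card * ψ (glueBits (S.sup id) j j₀)) := by ring
        _ = ψ (glueBits γ j j₀) * (ψ j₀ * ∏ γ ∈ S, ψ (glueBits γ j j₀)) := by rw [ihS]
        _ = ψ j₀ * (ψ (glueBits γ j j₀) * ∏ γ ∈ S, ψ (glueBits γ j j₀)) := by ring
  -- P is nonempty
  have hPne : P.Nonempty := by
    rcases P.eq_empty_or_nonempty with h | h
    · exfalso
      rw [h] at hsup
      have : (⟨0, by omega⟩ : Fin n) ∈ (∅ : Finset (Finset (Fin n))).sup id := by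
        rw [hsup]; exact Finset.mem_univ _
      simp at this
    · exact h
  obtain ⟨γ₀, hγ₀⟩ := hPne
  -- extension of a partial bit assignment on γ by j₀
  refine ⟨fun γ x => (if γ = γ₀ then ψ j₀ else 1) *
      ψ (fun i => if h : i ∈ γ then x ⟨i, h⟩ else j₀ i) / ψ j₀, ?_⟩
  intro j
  have hext : ∀ γ : Finset (Fin n),
      (fun i => if h : i ∈ γ then (fun i' : {i // i ∈ γ} => j i'.1) ⟨i, h⟩ else j₀ i)
        = glueBits γ j j₀ := by
    intro γ; funext i; by_cases hi : i ∈ γ <;> simp [glueBits, hi]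
  have hmain := key P (subset_refl P) j
  rw [hsup] at hmain
  have hid : glueBits Finset.univ j j₀ = j := by
    funext i; simp [glueBits]
  rw [hid] at hmain
  have hprod : ∏ γ ∈ P, ((if γ = γ₀ then ψ j₀ else 1) *
      ψ (fun i => if h : i ∈ γ then (fun i' : {i // i ∈ γ} => j i'.1) ⟨i, h⟩ else j₀ i) / ψ j₀)
      = ψ j₀ * (∏ γ ∈ P, ψ (glueBits γ j j₀)) / ψ j₀ ^ P.card := by
    have h1 : ∀ γ ∈ P, ((if γ = γ₀ then ψ j₀ else 1) *
        ψ (fun i => if h : i ∈ γ then (fun i' : {i // i ∈ γ} => j i'.1) ⟨i, h⟩ else j₀ i) / ψ j₀)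
        = ((if γ = γ₀ then ψ j₀ else 1) * ψ (glueBits γ j j₀) / ψ j₀) := by
      intro γ _; rw [hext γ]
    rw [Finset.prod_congr rfl h1, Finset.prod_div_distrib, Finset.prod_mul_distrib,
      Finset.prod_ite_eq' P γ₀ (fun _ => ψ j₀), if_pos hγ₀, Finset.prod_const]
  have hpow : ψ j₀ ^ P.card ≠ 0 := pow_ne_zero _ hj₀
  calc ψ j = ψ j₀ * (∏ γ ∈ P, ψ (glueBits γ j j₀)) / ψ j₀ ^ P.card := by
        field_simp
        linear_combination hmain
    _ = _ := hprod.symm
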